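/- Let M = (S, f, s₀, F) be a deterministic Büchi automaton over Bool in which every state is reachable from s₀. Then μ(L(M)) = 0 if and only if F ∩ g = ∅ for every leaf connected component g of M. -/

import Mathlib

open MeasureTheory Filter

/-- The fair-coin product probability measure on Cantor space `ℕ → Bool`,
constructed as the pushforward of Lebesgue measure on `[0,1)` under binary expansion. -/
noncomputable def mu : Measure (ℕ → Bool) :=
  Measure.map (fun x n => decide (⌊x * 2 ^ (n + 1)⌋ % 2 = 1))
    (volume.restrict (Set.Ico (0 : ℝ) 1))

/-- Action of a word on a state of an automaton. -/
def act {S A : Type*} (f : S → A → S) (s : S) (w : List A) : S := w.foldl f s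

/-- The run of a sequence `X` on the machine `(S, f, s₀)`. -/
def run {S : Type*} (f : S → Bool → S) (s₀ : S) (X : ℕ → Bool) : ℕ → S
  | 0 => s₀
  | n + 1 => f (run f s₀ X n) (X n)

/-- `t` is reachable from `s`. -/
def Reach {S : Type*} (f : S → Bool → S) (s t : S) : Prop := ∃ w : List Bool, act f s w = t

/-- The connected component of a state `s`. -/
def component {S : Type*} (f : S → Bool → S) (s : S) : Set S :=
  {t | Reach f s t ∧ Reach f t s}

/-- `g` is a leaf connected component. -/
def IsLeafComponent {S : Type*} (f : S → Bool → S) (g : Set S) : Prop :=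
  (∃ s, g = component f s) ∧ ∀ s ∈ g, ∀ t, Reach f s t → Reach f t s

/-- The word `w` occurs as a subword of the sequence `X`. -/
def Occurs (w : List Bool) (X : ℕ → Bool) : Prop :=
  ∃ n, ∀ k < w.length, X (n + k) = w.getD k false

/-- `X` is disjunctive: every word occurs in `X` as a subword. -/
def Disjunctive (X : ℕ → Bool) : Prop := ∀ w : List Bool, Occurs w X

/-- The word `w` is a prefix of the sequence `X`. -/
def IsPrefixOfSeq (w : List Bool) (X : ℕ → Bool) : Prop :=
  ∀ k < w.length, X k = w.getD k false

/-- `[L]`: the set of sequences having some prefix in the language `L`. -/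
def cyl (L : Set (List Bool)) : Set (ℕ → Bool) := {X | ∃ w ∈ L, IsPrefixOfSeq w X}

/-- `I(X)`: the set of states visited infinitely often by the run of `X`. -/
def InfOcc {S : Type*} (f : S → Bool → S) (s₀ : S) (X : ℕ → Bool) : Set S :=
  {s | ∃ᶠ n in atTop, run f s₀ X n = s}

/-- `X` is accepted by the deterministic Büchi automaton `(S, f, s₀, F)`. -/
def BuchiAccepts {S : Type*} (f : S → Bool → S) (s₀ : S) (F : Set S) (X : ℕ → Bool) : Prop :=
  ∃ᶠ n in atTop, run f s₀ X n ∈ F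

/-- A language is regular if it is accepted by a DFA with finitely many states. -/
def Regular {A : Type} (L : Set (List A)) : Prop :=
  ∃ (S : Type) (_ : Fintype S) (f : S → A → S) (s₀ : S) (F : Set S),
    L = {w | act f s₀ w ∈ F}

/-- The convolution of two words. -/
def conv (x i : List Bool) : List (Option Bool × Option Bool) :=
  (List.range (max x.length i.length)).map (fun k => (x[k]?, i[k]?))

/-- `(I, U)` is an automatic family. -/
def IsAutomaticFamily (I : Set (List Bool)) (U : List Bool → Set (List Bool)) : Prop :=
  Regular I ∧ Regular {c | ∃ i ∈ I, ∃ x ∈ U i, c = conv x i}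

/-- `(I, U)` is an automatic randomness test (ART). -/
def IsART (I : Set (List Bool)) (U : List Bool → Set (List Bool)) : Prop :=
  IsAutomaticFamily I U ∧ ∀ ε : ENNReal, 0 < ε → ∃ i ∈ I, mu (cyl (U i)) ≤ ε

/-- `(I, U)` is a Martin-Löf automatic randomness test (MART). -/
def IsMART (I : Set (List Bool)) (U : List Bool → Set (List Bool)) : Prop :=
  IsAutomaticFamily I U ∧ I.Infinite ∧
    ∀ i ∈ I, mu (cyl (U i)) ≤ (2 : ENNReal) ^ (-(i.length : ℤ))

/-- The covering region `F(I, U)` of a test. -/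
def coverRegion (I : Set (List Bool)) (U : List Bool → Set (List Bool)) : Set (ℕ → Bool) :=
  ⋂ i ∈ I, cyl (U i)

namespace S6

noncomputable def D : ℝ → ℕ → Bool := fun x n => decide (⌊x * 2 ^ (n + 1)⌋ % 2 = 1)

def val (v : ℕ → Bool) : ℕ → ℕ
  | 0 => 0
  | n+1 => 2 * val v n + (v n).toNat

lemma measurable_D : Measurable D := by
  apply measurable_pi_lambda
  intro n
  have h1 : Measurable fun x : ℝ => ⌊x * 2 ^ (n + 1)⌋ :=
    Int.measurable_floor.comp (measurable_id.mul_const _)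
  exact (measurable_from_top (f := fun z : ℤ => decide (z % 2 = 1))).comp h1

lemma measurableSet_atom (n : ℕ) (v : ℕ → Bool) :
    MeasurableSet {X : ℕ → Bool | ∀ k < n, X k = v k} := by
  have : {X : ℕ → Bool | ∀ k < n, X k = v k} =
      ⋂ k ∈ Finset.range n, (fun X : ℕ → Bool => X k) ⁻¹' {v k} := by
    ext X; simp [Set.mem_iInter]
  rw [this]
  exact MeasurableSet.biInter (Set.to_countable _)
    (fun k _ => (measurable_pi_apply k) (MeasurableSet.singleton _))

lemma preimage_eq (n : ℕ) (v : ℕ → Bool) :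
    Set.Ico (0:ℝ) 1 ∩ D ⁻¹' {X | ∀ k < n, X k = v k} =
      Set.Ico ((val v n : ℝ)/2^n) ((val v n + 1)/2^n) := by
  induction n with
  | zero => simp [val]
  | succ n ih =>
      have hsplit : (D ⁻¹' {X | ∀ k < n + 1, X k = v k}) =
          (D ⁻¹' {X | ∀ k < n, X k = v k}) ∩ {x | D x n = v n} := by
        ext x
        simp only [Set.mem_preimage, Set.mem_setOf_eq, Set.mem_inter_iff]
        constructor
        · exact fun h => ⟨fun k hk => h k (Nat.lt_succ_of_lt hk), h n (Nat.lt_succ_self n)⟩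
        · rintro ⟨h1, h2⟩ k hk
          rcases Nat.lt_succ_iff_lt_or_eq.mp hk with h | rfl
          · exact h1 k h
          · exact h2
      rw [hsplit, ← Set.inter_assoc, ih]
      set c := val v n with hc
      have h2n : (0:ℝ) < 2^n := by positivity
      have h2n1 : (0:ℝ) < 2^(n+1) := by positivity
      have ha : (c:ℝ)/2^n = (2*c)/2^(n+1) := by field_simp; ring
      have hb : ((c:ℝ)+1)/2^n = (2*c+2)/2^(n+1) := by field_simp; ring
      have hvv : val v (n+1) = 2*c + (v n).toNat := by simp [val, ← hc]
      have key : ∀ x : ℝ, (2*(c:ℝ))/2^(n+1) ≤ x → x < (2*(c:ℝ)+2)/2^(n+1) →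
          (D x n = v n ↔
            ((val v (n+1) : ℝ)/2^(n+1) ≤ x ∧ x < ((val v (n+1):ℝ) + 1)/2^(n+1))) := by
        intro x h1 h2
        rw [div_le_iff₀ h2n1] at h1
        rw [lt_div_iff₀ h2n1] at h2
        have hge : (2*(c:ℤ)) ≤ ⌊x * 2^(n+1)⌋ := Int.le_floor.mpr (by push_cast; linarith)
        have hlt : ⌊x * 2^(n+1)⌋ < 2*(c:ℤ) + 2 := Int.floor_lt.mpr (by push_cast; linarith)
        rcases lt_or_ge (x * 2^(n+1)) (2*(c:ℝ)+1) with hx | hx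
        · have hfl : ⌊x * 2^(n+1)⌋ = 2*(c:ℤ) := by
            have : ⌊x * 2^(n+1)⌋ < 2*(c:ℤ) + 1 := Int.floor_lt.mpr (by push_cast; linarith)
            omega
          have hD : D x n = false := by simp [D, hfl]
          cases hvn : v n
          · simp only [hvn, Bool.toNat_false, Nat.add_zero] at hvv
            rw [hD, hvv]
            simp only [true_iff]
            push_cast
            exact ⟨(div_le_iff₀ h2n1).mpr (by linarith), (lt_div_iff₀ h2n1).mpr (by linarith)⟩
          · simp only [hvn, Bool.toNat_true] at hvv
            rw [hD, hvv]
            simp only [Bool.false_eq_true, false_iff, not_and, not_lt]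
            intro hcon
            rw [div_le_iff₀ h2n1] at hcon
            push_cast at hcon
            linarith
        · have hfl : ⌊x * 2^(n+1)⌋ = 2*(c:ℤ) + 1 := by
            have : (2*(c:ℤ)+1) ≤ ⌊x * 2^(n+1)⌋ := Int.le_floor.mpr (by push_cast; linarith)
            omega
          have hD : D x n = true := by simp [D, hfl]
          cases hvn : v n
          · simp only [hvn, Bool.toNat_false, Nat.add_zero] at hvv
            rw [hD, hvv]
            simp only [Bool.true_eq_false, false_iff, not_and, not_lt]
            intro _
            rw [div_le_iff₀ h2n1]
            push_cast
            linarith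
          · simp only [hvn, Bool.toNat_true] at hvv
            rw [hD, hvv]
            simp only [true_iff]
            push_cast
            exact ⟨(div_le_iff₀ h2n1).mpr (by linarith), (lt_div_iff₀ h2n1).mpr (by linarith)⟩
      have hsub : ∀ x : ℝ, ((val v (n+1) : ℝ)/2^(n+1) ≤ x ∧ x < ((val v (n+1):ℝ) + 1)/2^(n+1)) →
          (2*(c:ℝ))/2^(n+1) ≤ x ∧ x < (2*(c:ℝ)+2)/2^(n+1) := by
        intro x ⟨u1, u2⟩
        have hl : (2*(c:ℝ)) ≤ (val v (n+1) : ℝ) := by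
          rw [hvv]; push_cast; simp
        have hr : ((val v (n+1):ℝ) + 1) ≤ 2*(c:ℝ)+2 := by
          rw [hvv]; push_cast
          have : ((v n).toNat : ℝ) ≤ 1 := by cases v n <;> simp
          linarith
        rw [div_le_iff₀ h2n1] at u1 ⊢
        rw [lt_div_iff₀ h2n1] at u2 ⊢
        constructor
        · linarith
        · linarith
      ext x
      simp only [Set.mem_inter_iff, Set.mem_Ico, Set.mem_setOf_eq, ha, hb]
      constructor
      · rintro ⟨⟨u1, u2⟩, hd⟩
        exact (key x u1 u2).mp hd
      · intro hx
        obtain ⟨u1, u2⟩ := hsub x hx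
        exact ⟨⟨u1, u2⟩, (key x u1 u2).mpr hx⟩

lemma mu_atom (n : ℕ) (v : ℕ → Bool) :
    mu {X : ℕ → Bool | ∀ k < n, X k = v k} = 2⁻¹ ^ n := by
  have hD : mu = Measure.map D (volume.restrict (Set.Ico (0:ℝ) 1)) := rfl
  rw [hD, Measure.map_apply measurable_D (measurableSet_atom n v),
    Measure.restrict_apply' measurableSet_Ico, Set.inter_comm, preimage_eq n v,
    Real.volume_Ico]
  have h2n : (0:ℝ) < 2^n := by positivity
  have : ((val v n : ℝ) + 1)/2^n - (val v n : ℝ)/2^n = (2^n)⁻¹ := by field_simp; ring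
  rw [this, ← inv_pow, ENNReal.ofReal_pow (by norm_num : (0:ℝ) ≤ 2⁻¹)]
  norm_num
  rw [ENNReal.ofReal_div_of_pos (by norm_num)]
  norm_num

def extF (n : ℕ) (v : Fin n → Bool) : ℕ → Bool := fun k => if h : k < n then v ⟨k, h⟩ else false

def OccAt (w : List Bool) (n : ℕ) (X : ℕ → Bool) : Prop :=
  ∀ k < w.length, X (n + k) = w.getD k false

open scoped Classical in
lemma mu_upper (n : ℕ) (P : (ℕ → Bool) → Prop)
    (hP : ∀ X Y : ℕ → Bool, (∀ k < n, X k = Y k) → P X → P Y) :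
    mu {X | P X} ≤ (Finset.univ.filter (fun v : Fin n → Bool => P (extF n v))).card * 2⁻¹ ^ n := by
  set T := Finset.univ.filter (fun v : Fin n → Bool => P (extF n v)) with hT
  have hsub : {X | P X} ⊆ ⋃ v ∈ T, {X : ℕ → Bool | ∀ k < n, X k = extF n v k} := by
    intro X hX
    have hvmem : (fun k : Fin n => X k) ∈ T := by
      rw [hT, Finset.mem_filter]
      refine ⟨Finset.mem_univ _, hP X _ ?_ hX⟩
      intro k hk; simp [extF, hk]
    refine Set.mem_biUnion hvmem ?_
    intro k hk; simp [extF, hk]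
  calc mu {X | P X} ≤ ∑ v ∈ T, mu {X : ℕ → Bool | ∀ k < n, X k = extF n v k} :=
        le_trans (measure_mono hsub) (measure_biUnion_finset_le T _)
  _ = T.card * 2⁻¹ ^ n := by
      rw [Finset.sum_congr rfl (fun v _ => mu_atom n (extF n v)), Finset.sum_const,
        nsmul_eq_mul]

open scoped Classical in
noncomputable def Tset (W : List Bool) (N m : ℕ) : Finset (Fin (N + m * W.length) → Bool) :=
  Finset.univ.filter (fun v => ∀ j < m, ¬ OccAt W (N + j * W.length) (extF _ v))

lemma occAt_congr {W : List Bool} {p : ℕ} {X Y : ℕ → Bool}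
    (h : ∀ k < W.length, X (p + k) = Y (p + k)) : OccAt W p X ↔ OccAt W p Y := by
  constructor <;> intro ho k hk
  · rw [← h k hk]; exact ho k hk
  · rw [h k hk]; exact ho k hk

lemma card_Tset (W : List Bool) (N : ℕ) : ∀ m, (Tset W N m).card ≤ 2^N * (2^W.length - 1)^m := by
  intro m
  induction m with
  | zero =>
      calc (Tset W N 0).card ≤ Fintype.card (Fin (N + 0 * W.length) → Bool) :=
            Finset.card_le_univ _
      _ = 2^N * (2^W.length - 1)^0 := by simp [Fintype.card_fun]
  | succ m ih =>
      classical
      set L := W.length with hLdef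
      set n₁ := N + m * L with hn1
      have hn2 : N + (m+1) * L = n₁ + L := by rw [hn1]; ring
      set Wb : Fin L → Bool := fun r => W.getD r false with hWb
      set φ : (Fin (N + (m+1) * L) → Bool) → (Fin n₁ → Bool) × (Fin L → Bool) :=
        fun v => (fun i => v ⟨i, by omega⟩, fun r => v ⟨n₁ + r, by omega⟩) with hφ
      have hmaps : ∀ v ∈ Tset W N (m+1), φ v ∈ (Tset W N m) ×ˢ (Finset.univ.erase Wb) := by
        intro v hv
        rw [Tset, Finset.mem_filter] at hv
        obtain ⟨-, hv⟩ := hv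
        rw [Finset.mem_product]
        constructor
        · rw [Tset, Finset.mem_filter]
          refine ⟨Finset.mem_univ _, fun j hj => ?_⟩
          have hagree : ∀ k < L, extF n₁ (φ v).1 (N + j * L + k) =
              extF (N + (m+1)*L) v (N + j * L + k) := by
            intro k hk
            have e1 : (j + 1) * L ≤ m * L := Nat.mul_le_mul_right L hj
            have e2 : (j + 1) * L = j * L + L := by ring
            have h1 : N + j * L + k < n₁ := by omega
            have h2 : N + j * L + k < N + (m+1) * L := by omega
            simp only [extF, dif_pos h1, dif_pos h2, hφ]
          rw [occAt_congr hagree]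
          exact hv j (by omega)
        · rw [Finset.mem_erase]
          refine ⟨?_, Finset.mem_univ _⟩
          intro heq
          apply hv m (by omega)
          intro k hk
          have h2 : N + m * L + k < N + (m+1) * L := by omega
          have : (φ v).2 ⟨k, hk⟩ = Wb ⟨k, hk⟩ := by rw [heq]
          simp only [hφ, hWb] at this
          simp only [extF]
          rw [dif_pos h2]
          exact this
      have hinj : Set.InjOn φ (Tset W N (m+1)) := by
        intro v _ v' _ heq
        funext i
        have hi2 := i.isLt
        have h1 := congrArg Prod.fst heq
        have h2 := congrArg Prod.snd heq
        simp only [hφ] at h1 h2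
        rcases lt_or_ge (i : ℕ) n₁ with h | h
        · have := congrFun h1 ⟨i, h⟩
          simpa using this
        · have hr : (i : ℕ) - n₁ < L := by omega
          have := congrFun h2 ⟨(i : ℕ) - n₁, hr⟩
          simp only at this
          have hi : (⟨n₁ + ((i : ℕ) - n₁), by omega⟩ : Fin (N + (m+1) * L)) = i := by
            apply Fin.ext; simp; omega
          rwa [hi] at this
      calc (Tset W N (m+1)).card ≤ ((Tset W N m) ×ˢ (Finset.univ.erase Wb)).card :=
            Finset.card_le_card_of_injOn φ hmaps hinj
      _ = (Tset W N m).card * (2^L - 1) := by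
          rw [Finset.card_product, Finset.card_erase_of_mem (Finset.mem_univ _)]
          simp [Fintype.card_fun]
      _ ≤ (2^N * (2^L - 1)^m) * (2^L - 1) := Nat.mul_le_mul_right _ ih
      _ = 2^N * (2^L - 1)^(m+1) := by ring

lemma pow_mul_inv_pow (n : ℕ) : (2:ENNReal)^n * 2⁻¹^n = 1 := by
  rw [← mul_pow, ENNReal.mul_inv_cancel two_ne_zero (by norm_num), one_pow]

lemma mu_bad (W : List Bool) (N : ℕ) :
    mu {X | ∀ j : ℕ, ¬ OccAt W (N + j * W.length) X} = 0 := by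
  classical
  set L := W.length with hLdef
  set a := 2^L - 1 with ha
  set q : ENNReal := ((a : ℕ) : ENNReal) * 2⁻¹ ^ L with hq
  have hbound : ∀ m : ℕ, mu {X | ∀ j : ℕ, ¬ OccAt W (N + j * L) X} ≤ q ^ m := by
    intro m
    have hsub : {X : ℕ → Bool | ∀ j : ℕ, ¬ OccAt W (N + j * L) X} ⊆
        {X | ∀ j < m, ¬ OccAt W (N + j * L) X} := fun X hX j _ => hX j
    have hP : ∀ X Y : ℕ → Bool, (∀ k < N + m * L, X k = Y k) →
        (∀ j < m, ¬ OccAt W (N + j * L) X) → (∀ j < m, ¬ OccAt W (N + j * L) Y) := by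
      intro X Y hagree hX j hj
      have e1 : (j + 1) * L ≤ m * L := Nat.mul_le_mul_right L hj
      have e2 : (j + 1) * L = j * L + L := by ring
      rw [← occAt_congr (fun k hk => hagree (N + j * L + k) (by omega))]
      exact hX j hj
    have h1 := mu_upper (N + m * L) (fun X => ∀ j < m, ¬ OccAt W (N + j * L) X) hP
    calc mu {X : ℕ → Bool | ∀ j : ℕ, ¬ OccAt W (N + j * L) X}
        ≤ mu {X | ∀ j < m, ¬ OccAt W (N + j * L) X} := measure_mono hsub
    _ ≤ _ := h1
    _ ≤ ((2^N * a^m : ℕ) : ENNReal) * 2⁻¹ ^ (N + m * L) := by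
        gcongr
        norm_cast
        refine le_trans (Finset.card_le_card ?_) (card_Tset W N m)
        intro v hv
        simp only [Tset, Finset.mem_filter] at hv ⊢
        exact hv
    _ = ((2:ENNReal)^N * 2⁻¹^N) * (((a:ℕ):ENNReal)^m * (2⁻¹^L)^m) := by
        push_cast
        rw [pow_add, pow_mul']
        ring
    _ = q ^ m := by rw [pow_mul_inv_pow, one_mul, hq, mul_pow]
  have h2L : ((2^L : ℕ) : ENNReal) = 2^L := by push_cast; norm_num
  have hqlt : q < 1 := by
    rw [hq]
    have hne0 : (2⁻¹ : ENNReal)^L ≠ 0 := pow_ne_zero _ (ENNReal.inv_ne_zero.mpr (by norm_num))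
    have hnetop : (2⁻¹ : ENNReal)^L ≠ ⊤ :=
      ENNReal.pow_ne_top (ENNReal.inv_ne_top.mpr two_ne_zero)
    calc ((a : ℕ) : ENNReal) * 2⁻¹^L < 2^L * 2⁻¹^L := by
          refine ENNReal.mul_lt_mul_left hne0 hnetop ?_
          rw [← h2L]
          exact_mod_cast Nat.sub_lt (Nat.pow_pos (n := L) (by norm_num : 0 < 2)) Nat.one_pos
    _ = 1 := pow_mul_inv_pow L
  have htend : Tendsto (fun m => q ^ m) atTop (nhds 0) :=
    ENNReal.tendsto_pow_atTop_nhds_zero_of_lt_one hqlt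
  have := ge_of_tendsto' htend hbound
  exact le_antisymm this zero_le

lemma mu_never (W : List Bool) : mu {X | ∃ N, ∀ n, N ≤ n → ¬ OccAt W n X} = 0 := by
  have hsub : {X | ∃ N, ∀ n, N ≤ n → ¬ OccAt W n X} ⊆
      ⋃ N : ℕ, {X | ∀ j : ℕ, ¬ OccAt W (N + j * W.length) X} := by
    rintro X ⟨N, hN⟩
    exact Set.mem_iUnion.mpr ⟨N, fun j => hN _ (Nat.le_add_right _ _)⟩
  exact le_antisymm (le_trans (measure_mono hsub)
    (le_of_eq (measure_iUnion_null (fun N => mu_bad W N)))) zero_le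

lemma mu_prefix (u : List Bool) : mu {X | IsPrefixOfSeq u X} = 2⁻¹ ^ u.length :=
  mu_atom u.length (fun k => u.getD k false)

section Automata
variable {S : Type} (f : S → Bool → S)

lemma act_append (s : S) (w₁ w₂ : List Bool) :
    act f s (w₁ ++ w₂) = act f (act f s w₁) w₂ := List.foldl_append

lemma reach_refl (s : S) : Reach f s s := ⟨[], rfl⟩

lemma reach_trans {s t u : S} : Reach f s t → Reach f t u → Reach f s u := by
  rintro ⟨w1, rfl⟩ ⟨w2, rfl⟩
  exact ⟨w1 ++ w2, act_append f s w1 w2⟩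

def Leafy (s : S) : Prop := ∀ t, Reach f s t → Reach f t s

lemma leafy_of_reach {s t : S} (hs : Leafy f s) (h : Reach f s t) : Leafy f t := by
  intro u hu
  exact reach_trans f (hs u (reach_trans f h hu)) h

lemma exists_leafy_reach [Fintype S] (s : S) : ∃ t, Reach f s t ∧ Leafy f t := by
  classical
  obtain ⟨t, ht, hmin⟩ := Set.exists_min_image {t | Reach f s t}
    (fun t => ({u | Reach f t u}).ncard) (Set.toFinite _) ⟨s, reach_refl f s⟩
  refine ⟨t, ht, ?_⟩
  intro u hu
  by_contra hnu
  have hsub : {w | Reach f u w} ⊂ {w | Reach f t w} := by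
    refine ⟨fun w hw => reach_trans f hu hw, fun hcon => hnu (hcon (reach_refl f t))⟩
  have h1 := Set.ncard_lt_ncard hsub (Set.toFinite _)
  have h2 := hmin u (reach_trans f ht hu)
  omega

lemma leafy_component_leaf {s : S} (hs : Leafy f s) : IsLeafComponent f (component f s) := by
  refine ⟨⟨s, rfl⟩, ?_⟩
  rintro a ⟨hsa, has⟩ t hat
  exact reach_trans f (hs t (reach_trans f hsa hat)) hsa

lemma step_mem_leaf {g : Set S} (hg : IsLeafComponent f g) {s : S} (hs : s ∈ g) (b : Bool) :
    f s b ∈ g := by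
  obtain ⟨⟨s', rfl⟩, hleaf⟩ := hg
  obtain ⟨h1, h2⟩ := hs
  have hstep : Reach f s (f s b) := ⟨[b], rfl⟩
  exact ⟨reach_trans f h1 hstep, reach_trans f (hleaf s ⟨h1, h2⟩ _ hstep) h2⟩

lemma act_mem_leaf {g : Set S} (hg : IsLeafComponent f g) {s : S} (hs : s ∈ g) (w : List Bool) :
    act f s w ∈ g := by
  induction w generalizing s with
  | nil => exact hs
  | cons b w ih => exact ih (step_mem_leaf f hg hs b)

lemma reach_in_leaf {g : Set S} (hg : IsLeafComponent f g) {t x : S} (ht : t ∈ g) (hx : x ∈ g) :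
    Reach f t x := by
  obtain ⟨⟨s', rfl⟩, -⟩ := hg
  exact reach_trans f ht.2 hx.1

lemma exists_leafy_word [Fintype S] : ∃ w : List Bool, ∀ s : S, Leafy f (act f s w) := by
  classical
  have key : ∀ l : List S, ∃ w : List Bool, ∀ s ∈ l, Leafy f (act f s w) := by
    intro l
    induction l with
    | nil => exact ⟨[], by simp⟩
    | cons a l ih =>
        obtain ⟨w, hw⟩ := ih
        obtain ⟨t, ⟨v, hv⟩, hleafy⟩ := exists_leafy_reach f (act f a w)
        refine ⟨w ++ v, ?_⟩
        intro s hs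
        rw [act_append]
        rcases List.mem_cons.mp hs with rfl | hs
        · rw [hv]; exact hleafy
        · exact leafy_of_reach f (hw s hs) ⟨v, rfl⟩
  obtain ⟨w, hw⟩ := key (Finset.univ.toList)
  exact ⟨w, fun s => hw s (by simp)⟩

lemma exists_pass_word [Fintype S] {g : Set S} (hg : IsLeafComponent f g) {x : S} (hx : x ∈ g) :
    ∃ W : List Bool, ∀ t ∈ g, ∃ p, p <+: W ∧ act f t p = x := by
  classical
  have key : ∀ l : List S, ∃ W : List Bool, ∀ t ∈ l, t ∈ g → ∃ p, p <+: W ∧ act f t p = x := by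
    intro l
    induction l with
    | nil => exact ⟨[], by simp⟩
    | cons a l ih =>
        obtain ⟨W, hW⟩ := ih
        by_cases hag : a ∈ g
        · have haW : act f a W ∈ g := act_mem_leaf f hg hag W
          obtain ⟨v, hv⟩ := reach_in_leaf f hg haW hx
          refine ⟨W ++ v, ?_⟩
          intro t ht htg
          rcases List.mem_cons.mp ht with rfl | ht
          · exact ⟨W ++ v, List.prefix_rfl, by rw [act_append, hv]⟩
          · obtain ⟨p, hp, hpa⟩ := hW t ht htg
            exact ⟨p, hp.trans (W.prefix_append v), hpa⟩
        · refine ⟨W, ?_⟩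
          intro t ht htg
          rcases List.mem_cons.mp ht with rfl | ht
          · exact absurd htg hag
          · exact hW t ht htg
  obtain ⟨W, hW⟩ := key (Finset.univ.toList)
  exact ⟨W, fun t htg => hW t (by simp) htg⟩

lemma run_add (s₀ : S) (X : ℕ → Bool) (n m : ℕ) :
    run f s₀ X (n + m) = act f (run f s₀ X n) ((List.range m).map (fun i => X (n + i))) := by
  induction m with
  | zero => simp [act]
  | succ m ih =>
      rw [show n + (m + 1) = (n + m) + 1 by ring]
      show f (run f s₀ X (n + m)) (X (n + m)) = _
      rw [ih, List.range_succ, List.map_append]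
      rw [act_append]
      rfl

lemma window_eq {X : ℕ → Bool} {w : List Bool} {n : ℕ}
    (hw : ∀ k < w.length, X (n + k) = w.getD k false) :
    (List.range w.length).map (fun i => X (n + i)) = w := by
  apply List.ext_getElem (by simp)
  intro k h1 h2
  simp only [List.getElem_map, List.getElem_range]
  rw [hw k h2, List.getD_eq_getElem _ _ h2]

lemma run_window {s₀ : S} {X : ℕ → Bool} {w : List Bool} {n : ℕ}
    (hw : ∀ k < w.length, X (n + k) = w.getD k false) :
    run f s₀ X (n + w.length) = act f (run f s₀ X n) w := by
  rw [run_add, window_eq hw]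

lemma run_prefix {s₀ : S} {X : ℕ → Bool} {u : List Bool} (hu : IsPrefixOfSeq u X) :
    run f s₀ X u.length = act f s₀ u := by
  have := run_window (f := f) (s₀ := s₀) (X := X) (w := u) (n := 0)
    (fun k hk => by simpa using hu k hk)
  simpa [run] using this

end Automata

theorem stmt6_aux {S : Type} [Fintype S] (f : S → Bool → S) (s₀ : S) (F : Set S)
    (hreach : ∀ s : S, Reach f s₀ s) :
    mu {X : ℕ → Bool | BuchiAccepts f s₀ F X} = 0 ↔
      ∀ g : Set S, IsLeafComponent f g → F ∩ g = ∅ := by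
  constructor
  · -- if some leaf meets F, positive measure
    intro hmu g hg
    by_contra hne
    obtain ⟨x, hxF, hxg⟩ := Set.eq_empty_iff_forall_notMem.not.mp hne |> fun h => by
      push_neg at h; exact h
    obtain ⟨u, hu⟩ := hreach x
    obtain ⟨W0, hW0⟩ := exists_pass_word f hg hxg
    set W := W0 ++ [false] with hWdef
    have hWpass : ∀ t ∈ g, ∃ p, p <+: W ∧ act f t p = x := by
      intro t htg
      obtain ⟨p, hp, hpa⟩ := hW0 t htg
      exact ⟨p, hp.trans (W0.prefix_append [false]), hpa⟩
    set Pref := {X : ℕ → Bool | IsPrefixOfSeq u X} with hPref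
    set Bad := {X : ℕ → Bool | ∃ N, ∀ n, N ≤ n → ¬ OccAt W n X} with hBad
    -- Pref \ Bad ⊆ Accept
    have hsub : Pref \ Bad ⊆ {X : ℕ → Bool | BuchiAccepts f s₀ F X} := by
      rintro X ⟨hXp, hXb⟩
      have hrun_u : run f s₀ X u.length = x := by rw [run_prefix f hXp, hu]
      have hg_run : ∀ m, u.length ≤ m → run f s₀ X m ∈ g := by
        intro m hm
        induction m with
        | zero =>
            rw [Nat.le_zero.mp hm] at hrun_u
            rw [hrun_u]; exact hxg
        | succ m ih =>
            rcases Nat.lt_or_ge u.length (m+1) with h | h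
            · have : run f s₀ X m ∈ g := ih (by omega)
              exact step_mem_leaf f hg this (X m)
            · have : u.length = m + 1 := le_antisymm hm h
              rw [← this, hrun_u]; exact hxg
      rw [Set.mem_setOf_eq, BuchiAccepts, frequently_atTop]
      intro N
      have : ∃ n, max N u.length ≤ n ∧ OccAt W n X := by
        by_contra hcon
        push_neg at hcon
        exact hXb ⟨max N u.length, hcon⟩
      obtain ⟨n, hn, hOcc⟩ := this
      obtain ⟨p, hp, hpa⟩ := hWpass (run f s₀ X n) (hg_run n (le_trans (le_max_right _ _) hn))
      have hrun : run f s₀ X (n + p.length) = x := by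
        have hwin : ∀ k < p.length, X (n + k) = p.getD k false := by
          intro k hk
          obtain ⟨r, hr⟩ := hp
          have hkW : k < W.length := by rw [← hr, List.length_append]; omega
          rw [hOcc k hkW, ← hr, List.getD_append _ _ _ _ hk]
        rw [run_window f hwin, hpa]
      exact ⟨n + p.length, by omega, by rw [hrun]; exact hxF⟩
    have hBad0 : mu Bad = 0 := mu_never W
    have hPrefpos : mu Pref = 2⁻¹ ^ u.length := mu_prefix u
    have hle : mu Pref ≤ mu (Pref \ Bad) + mu Bad := by
      calc mu Pref ≤ mu ((Pref \ Bad) ∪ Bad) := measure_mono (by intro X hX; by_cases h : X ∈ Bad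
                                                                 · exact Or.inr h
                                                                 · exact Or.inl ⟨hX, h⟩)
      _ ≤ mu (Pref \ Bad) + mu Bad := measure_union_le _ _
    rw [hBad0, add_zero, hPrefpos] at hle
    have : mu (Pref \ Bad) = 0 :=
      le_antisymm (le_trans (measure_mono hsub) (le_of_eq hmu)) zero_le
    rw [this] at hle
    exact absurd (le_antisymm hle zero_le) (by
      apply pow_ne_zero
      simp [ENNReal.inv_ne_zero])
  · -- no leaf meets F ⇒ measure zero
    intro hF
    obtain ⟨w0, hw0⟩ := exists_leafy_word f
    set W := w0 ++ [false] with hWdef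
    have hWleafy : ∀ s : S, Leafy f (act f s W) := by
      intro s
      rw [hWdef, act_append]
      exact leafy_of_reach f (hw0 s) ⟨[false], rfl⟩
    have hnotF : ∀ s : S, Leafy f s → s ∉ F := by
      intro s hs hsF
      have := hF (component f s) (leafy_component_leaf f hs)
      have hmem : s ∈ F ∩ component f s := ⟨hsF, reach_refl f s, reach_refl f s⟩
      rw [this] at hmem
      exact hmem
    have hsub : {X : ℕ → Bool | BuchiAccepts f s₀ F X} ⊆
        {X : ℕ → Bool | ∃ N, ∀ n, N ≤ n → ¬ OccAt W n X} := by
      intro X hX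
      by_contra hcon
      rw [Set.mem_setOf_eq] at hcon
      push_neg at hcon
      obtain ⟨n, -, hOcc⟩ := hcon 0
      have hWlen : 1 ≤ W.length := by rw [hWdef]; simp
      have hleafy_run : ∀ m, n + W.length ≤ m → Leafy f (run f s₀ X m) := by
        intro m hm
        induction m with
        | zero => exact absurd hm (by omega)
        | succ m ih =>
            rcases Nat.lt_or_ge (n + W.length) (m+1) with h | h
            · have : Leafy f (run f s₀ X m) := ih (by omega)
              exact leafy_of_reach f this ⟨[X m], rfl⟩
            · have he : n + W.length = m + 1 := le_antisymm hm h
              rw [← he, run_window f hOcc]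
              exact hWleafy _
      rw [Set.mem_setOf_eq, BuchiAccepts, frequently_atTop] at hX
      obtain ⟨m, hm, hmF⟩ := hX (n + W.length)
      exact hnotF _ (hleafy_run m hm) hmF
    exact le_antisymm (le_trans (measure_mono hsub) (le_of_eq (mu_never W))) zero_le

end S6

/-- A deterministic Büchi automaton (with all states reachable) has
measure-zero language iff no accepting state lies in a leaf connected component. -/
theorem stmt6 {S : Type} [Fintype S] (f : S → Bool → S) (s₀ : S) (F : Set S)
    (hreach : ∀ s : S, Reach f s₀ s) :
    mu {X : ℕ → Bool | BuchiAccepts f s₀ F X} = 0 ↔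
      ∀ g : Set S, IsLeafComponent f g → F ∩ g = ∅ := S6.stmt6_aux f s₀ F hreach
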